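/- Let θ > 0, H' ∈ (1/2, 1), K ∈ (0, 2) with H = H'K ∈ (1/2, 1). There is a constant C such that for all 0 < s ≤ t, ∫₀ˢ e^{-θ(s-u)} du ∫ₛᵗ e^{-θ(t-v)} (u^{2H'}+v^{2H'})^{K-2} (uv)^{2H'-1} dv ≤ C (t−s)^{2(H-1)}. -/

import Mathlib

open Real MeasureTheory
set_option maxHeartbeats 1000000

lemma expInt (θ : ℝ) (hθ : 0 < θ) (a b : ℝ) :
    ∫ v in a..b, Real.exp (-θ * (b - v)) ≤ 1 / θ := by
  have hderiv : ∀ v ∈ Set.uIcc a b,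
      HasDerivAt (fun v : ℝ => Real.exp (-θ * (b - v)) / θ) (Real.exp (-θ * (b - v))) v := by
    intro v _
    have h1 : HasDerivAt (fun v : ℝ => -θ * (b - v)) θ v := by
      have h : HasDerivAt (fun v : ℝ => θ * v + (-θ * b)) θ v := by
        simpa using ((hasDerivAt_id v).const_mul θ).add_const (-θ * b)
      exact h.congr_of_eventuallyEq (Filter.Eventually.of_forall fun x => by ring)
    have h3 := ((Real.hasDerivAt_exp (-θ * (b - v))).comp v h1).div_const θ
    rw [mul_div_cancel_right₀ _ hθ.ne'] at h3
    exact h3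
  have hint : IntervalIntegrable (fun v : ℝ => Real.exp (-θ * (b - v))) volume a b :=
    (Real.continuous_exp.comp (by continuity)).intervalIntegrable a b
  rw [intervalIntegral.integral_eq_sub_of_hasDerivAt hderiv hint]
  have h1 : Real.exp (-θ * (b - b)) = 1 := by simp
  rw [h1]
  have : 0 ≤ Real.exp (-θ * (b - a)) / θ := by positivity
  linarith

lemma expMulLe {θ x : ℝ} (hθ : 0 < θ) : Real.exp (-(θ * x)) * x ≤ 1 / θ := by
  have h1 : θ * x ≤ Real.exp (θ * x) := by nlinarith [Real.add_one_le_exp (θ * x)]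
  have h2 : 0 < Real.exp (θ * x) := Real.exp_pos _
  rw [Real.exp_neg, inv_mul_eq_div, div_le_div_iff₀ h2 hθ]
  nlinarith

theorem stmt18 (θ H' K : ℝ) (hθ : 0 < θ) (hH' : H' ∈ Set.Ioo (1/2 : ℝ) 1)
    (hK : K ∈ Set.Ioo (0 : ℝ) 2) (hH : H' * K ∈ Set.Ioo (1/2 : ℝ) 1) :
    ∃ C > 0, ∀ s t : ℝ, 0 < s → s ≤ t →
      ∫ u in (0:ℝ)..s, (∫ v in s..t, Real.exp (-θ * (s - u)) * Real.exp (-θ * (t - v)) *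
            (u ^ (2 * H') + v ^ (2 * H')) ^ (K - 2) * (u * v) ^ (2 * H' - 1))
        ≤ C * (t - s) ^ (2 * (H' * K - 1)) := by
  set A : ℝ := 2 * (H' * K) - 2 with hA
  have hA0 : A < 0 := by simp only [hA]; nlinarith [hH.2]
  have hA1 : -1 < A := by simp only [hA]; nlinarith [hH.1]
  have hA1' : 0 < A + 1 := by linarith
  refine ⟨(2 : ℝ) ^ (-A) * (1 / (A + 1) + 1) / θ ^ 2, ?_, ?_⟩
  · apply div_pos (mul_pos (Real.rpow_pos_of_pos two_pos _) (by positivity)) (by positivity)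
  intro s t hs hst
  have hexpA : 2 * (H' * K - 1) = A := by rw [hA]; ring
  rw [hexpA]
  rcases eq_or_lt_of_le hst with rfl | hst'
  · simp [Real.zero_rpow hA0.ne]
  -- main case s < t
  set g : ℝ → ℝ → ℝ := fun u v => Real.exp (-θ * (s - u)) * Real.exp (-θ * (t - v)) *
      (u ^ (2 * H') + v ^ (2 * H')) ^ (K - 2) * (u * v) ^ (2 * H' - 1) with hg
  set B : ℝ → ℝ := fun v => Real.exp (-θ * (t - v)) * (v - s) ^ A with hB
  set T : ℝ := t - s with hT
  have hT0 : 0 < T := by simp [hT]; linarith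
  -- integrability of the rpow part and of B
  have hrpow : IntervalIntegrable (fun v : ℝ => (v - s) ^ A) volume s t := by
    have h := (intervalIntegral.intervalIntegrable_rpow' (a := 0) (b := t - s) hA1).comp_sub_right s
    simpa using h
  have hBint : IntervalIntegrable B volume s t :=
    hrpow.continuousOn_mul (Real.continuous_exp.comp (by continuity)).continuousOn
  set I : ℝ := ∫ v in s..t, B v with hI
  have hI0 : 0 ≤ I := by
    apply intervalIntegral.integral_nonneg hst
    intro v hv
    exact mul_nonneg (Real.exp_pos _).le (Real.rpow_nonneg (sub_nonneg.2 hv.1) A)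
-- pointwise key bound
  have hkey : ∀ u ∈ Set.Icc (0:ℝ) s, ∀ v ∈ Set.Ioc s t,
      g u v ≤ Real.exp (-θ * (s - u)) * B v := by
    intro u hu v hv
    have hv0 : 0 < v := lt_trans hs hv.1
    have hvs : 0 < v - s := sub_pos.2 hv.1
    have hu0 : 0 ≤ u := hu.1
    have huv : u ≤ v := le_trans hu.2 hv.1.le
    have h2H' : (0:ℝ) < 2 * H' := by nlinarith [hH'.1]
    have h2H1 : (0:ℝ) ≤ 2 * H' - 1 := by nlinarith [hH'.1]
    have hPQ : (u ^ (2 * H') + v ^ (2 * H')) ^ (K - 2) * (u * v) ^ (2 * H' - 1)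
        ≤ (v - s) ^ A := by
      have h1 : (u ^ (2 * H') + v ^ (2 * H')) ^ (K - 2) ≤ (v ^ (2 * H')) ^ (K - 2) :=
        Real.rpow_le_rpow_of_nonpos (Real.rpow_pos_of_pos hv0 _)
          (le_add_of_nonneg_left (Real.rpow_nonneg hu0 _)) (by linarith [hK.2])
      have h2 : (u * v) ^ (2 * H' - 1) = u ^ (2 * H' - 1) * v ^ (2 * H' - 1) :=
        Real.mul_rpow hu0 hv0.le
      have h3 : u ^ (2 * H' - 1) ≤ v ^ (2 * H' - 1) := Real.rpow_le_rpow hu0 huv h2H1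
      have h4 : (v ^ (2 * H')) ^ (K - 2) * (v ^ (2 * H' - 1) * v ^ (2 * H' - 1)) = v ^ A := by
        rw [← Real.rpow_mul hv0.le, ← Real.rpow_add hv0, ← Real.rpow_add hv0]
        congr 1
        rw [hA]; ring
      have h5 : v ^ A ≤ (v - s) ^ A :=
        Real.rpow_le_rpow_of_nonpos hvs (by linarith) hA0.le
      calc (u ^ (2 * H') + v ^ (2 * H')) ^ (K - 2) * (u * v) ^ (2 * H' - 1)
          ≤ (v ^ (2 * H')) ^ (K - 2) * (u ^ (2 * H' - 1) * v ^ (2 * H' - 1)) := by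
            rw [h2]
            exact mul_le_mul_of_nonneg_right h1
              (mul_nonneg (Real.rpow_nonneg hu0 _) (Real.rpow_nonneg hv0.le _))
        _ ≤ (v ^ (2 * H')) ^ (K - 2) * (v ^ (2 * H' - 1) * v ^ (2 * H' - 1)) := by
            apply mul_le_mul_of_nonneg_left _ (Real.rpow_nonneg (Real.rpow_nonneg hv0.le _) _)
            exact mul_le_mul_of_nonneg_right h3 (Real.rpow_nonneg hv0.le _)
        _ = v ^ A := h4
        _ ≤ (v - s) ^ A := h5
    have hE : 0 ≤ Real.exp (-θ * (s - u)) * Real.exp (-θ * (t - v)) := by positivity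
    calc g u v = (Real.exp (-θ * (s - u)) * Real.exp (-θ * (t - v))) *
          ((u ^ (2 * H') + v ^ (2 * H')) ^ (K - 2) * (u * v) ^ (2 * H' - 1)) := by
            rw [hg]; ring
      _ ≤ (Real.exp (-θ * (s - u)) * Real.exp (-θ * (t - v))) * ((v - s) ^ A) :=
          mul_le_mul_of_nonneg_left hPQ hE
      _ = Real.exp (-θ * (s - u)) * B v := by rw [hB]; ring
  -- integrability of inner integrand
  have hgint : ∀ u ∈ Set.Icc (0:ℝ) s, IntervalIntegrable (g u) volume s t := by
    intro u hu
    apply ContinuousOn.intervalIntegrable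
    rw [Set.uIcc_of_le hst]
    have h2H' : (0:ℝ) < 2 * H' := by nlinarith [hH'.1]
    have hc1 : ContinuousOn (fun v : ℝ => (u ^ (2 * H') + v ^ (2 * H')) ^ (K - 2))
        (Set.Icc s t) := by
      apply ContinuousOn.rpow_const
      · exact continuousOn_const.add (continuousOn_id.rpow_const
          (fun x _ => Or.inr h2H'.le))
      · intro v hv
        left
        have : 0 < v ^ (2 * H') := Real.rpow_pos_of_pos (lt_of_lt_of_le hs hv.1) _
        have : 0 ≤ u ^ (2 * H') := Real.rpow_nonneg hu.1 _
        positivity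
    have hc2 : ContinuousOn (fun v : ℝ => (u * v) ^ (2 * H' - 1)) (Set.Icc s t) :=
      (continuousOn_const.mul continuousOn_id).rpow_const
        (fun x _ => Or.inr (by nlinarith [hH'.1]))
    exact ((((Real.continuous_exp.comp (by continuity)).continuousOn.mul
      (Real.continuous_exp.comp (by continuity)).continuousOn).mul hc1).mul hc2)
  -- inner inequality
  have hinner : ∀ u ∈ Set.Icc (0:ℝ) s,
      (∫ v in s..t, g u v) ≤ Real.exp (-θ * (s - u)) * I := by
    intro u hu
    have hrhs : Real.exp (-θ * (s - u)) * I
        = ∫ v in s..t, Real.exp (-θ * (s - u)) * B v := by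
      rw [hI, intervalIntegral.integral_const_mul]
    rw [hrhs, intervalIntegral.integral_of_le hst, intervalIntegral.integral_of_le hst]
    apply setIntegral_mono_on ((hgint u hu).1) ((hBint.const_mul _).1) measurableSet_Ioc
    exact fun v hv => hkey u hu v hv
  -- F and its properties
  set F : ℝ → ℝ := fun u => ∫ v in s..t, g u v with hF
  have hFnonneg : ∀ u ∈ Set.Icc (0:ℝ) s, 0 ≤ F u := by
    intro u hu
    apply intervalIntegral.integral_nonneg hst
    intro v hv
    have hv0 : (0:ℝ) ≤ v := le_trans hs.le hv.1
    have : 0 ≤ u ^ (2 * H') + v ^ (2 * H') :=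
      add_nonneg (Real.rpow_nonneg hu.1 _) (Real.rpow_nonneg hv0 _)
    exact mul_nonneg (mul_nonneg (mul_nonneg (Real.exp_pos _).le (Real.exp_pos _).le)
      (Real.rpow_nonneg this _)) (Real.rpow_nonneg (mul_nonneg hu.1 hv0) _)
  have hFmeas : AEStronglyMeasurable F (volume.restrict (Set.Ioc (0:ℝ) s)) := by
    have hF' : F = fun u => ∫ v in Set.Ioc s t, g u v := by
      funext u; rw [hF]; exact intervalIntegral.integral_of_le hst
    rw [hF']
    apply StronglyMeasurable.aestronglyMeasurable
    apply MeasureTheory.StronglyMeasurable.integral_prod_right (f := g)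
    apply Measurable.stronglyMeasurable
    have m1 : Measurable fun p : ℝ × ℝ => Real.exp (-θ * (s - p.1)) :=
      ((measurable_const.sub measurable_fst).const_mul (-θ)).exp
    have m2 : Measurable fun p : ℝ × ℝ => Real.exp (-θ * (t - p.2)) :=
      ((measurable_const.sub measurable_snd).const_mul (-θ)).exp
    have m3 : Measurable fun p : ℝ × ℝ =>
        (p.1 ^ (2 * H') + p.2 ^ (2 * H')) ^ (K - 2) :=
      (((measurable_fst.pow measurable_const).add (measurable_snd.pow measurable_const)).pow measurable_const)
    have m4 : Measurable fun p : ℝ × ℝ => (p.1 * p.2) ^ (2 * H' - 1) :=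
      ((measurable_fst.mul measurable_snd).pow measurable_const)
    exact ((m1.mul m2).mul m3).mul m4
  have hboundint : IntegrableOn (fun u : ℝ => Real.exp (-θ * (s - u)) * I)
      (Set.Ioc (0:ℝ) s) :=
    (((Real.continuous_exp.comp (by continuity)).mul
      continuous_const).intervalIntegrable 0 s).1
  have hFint : IntegrableOn F (Set.Ioc (0:ℝ) s) := by
    apply Integrable.mono' hboundint hFmeas
    filter_upwards [self_mem_ae_restrict measurableSet_Ioc] with u hu
    have hu' : u ∈ Set.Icc (0:ℝ) s := ⟨hu.1.le, hu.2⟩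
    rw [Real.norm_eq_abs, abs_of_nonneg (hFnonneg u hu')]
    exact hinner u hu'
  -- outer bound
  have hexpint : ∫ u in (0:ℝ)..s, Real.exp (-θ * (s - u)) ≤ 1 / θ := expInt θ hθ 0 s
  have hexpint0 : 0 ≤ ∫ u in (0:ℝ)..s, Real.exp (-θ * (s - u)) :=
    intervalIntegral.integral_nonneg hs.le (fun u _ => (Real.exp_pos _).le)
  have houter : (∫ u in (0:ℝ)..s, F u) ≤ (1 / θ) * I := by
    calc (∫ u in (0:ℝ)..s, F u) = ∫ u in Set.Ioc (0:ℝ) s, F u :=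
          intervalIntegral.integral_of_le hs.le
      _ ≤ ∫ u in Set.Ioc (0:ℝ) s, Real.exp (-θ * (s - u)) * I :=
          setIntegral_mono_on hFint hboundint measurableSet_Ioc
            (fun u hu => hinner u ⟨hu.1.le, hu.2⟩)
      _ = (∫ u in (0:ℝ)..s, Real.exp (-θ * (s - u))) * I := by
          rw [← intervalIntegral.integral_of_le hs.le,
            ← intervalIntegral.integral_mul_const]
      _ ≤ (1 / θ) * I := mul_le_mul_of_nonneg_right hexpint hI0
  -- bound I
  set m : ℝ := (s + t) / 2 with hm
  have hsm : s < m := by rw [hm]; linarith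
  have hmt : m < t := by rw [hm]; linarith
  have hms0 : 0 < m - s := by linarith
  have htm : t - m = m - s := by rw [hm]; ring
  have hsub1 : Set.uIcc s m ⊆ Set.uIcc s t := by
    rw [Set.uIcc_of_le hsm.le, Set.uIcc_of_le hst]
    exact Set.Icc_subset_Icc le_rfl hmt.le
  have hsub2 : Set.uIcc m t ⊆ Set.uIcc s t := by
    rw [Set.uIcc_of_le hmt.le, Set.uIcc_of_le hst]
    exact Set.Icc_subset_Icc hsm.le le_rfl
  have hB1 : IntervalIntegrable B volume s m := hBint.mono_set hsub1
  have hB2 : IntervalIntegrable B volume m t := hBint.mono_set hsub2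
  have hrpow1 : IntervalIntegrable (fun v : ℝ => (v - s) ^ A) volume s m :=
    hrpow.mono_set hsub1
  have hsplit : I = (∫ v in s..m, B v) + ∫ v in m..t, B v :=
    (intervalIntegral.integral_add_adjacent_intervals hB1 hB2).symm
  -- piece 1
  have h1 : (∫ v in s..m, B v) ≤ (m - s) ^ A / (A + 1) * (1 / θ) := by
    have hb : (∫ v in s..m, B v) ≤ ∫ v in s..m, Real.exp (-θ * (t - m)) * (v - s) ^ A := by
      rw [intervalIntegral.integral_of_le hsm.le, intervalIntegral.integral_of_le hsm.le]
      apply setIntegral_mono_on hB1.1 ((hrpow1.const_mul _).1) measurableSet_Ioc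
      intro v hv
      apply mul_le_mul_of_nonneg_right _ (Real.rpow_nonneg (sub_nonneg.2 hv.1.le) _)
      apply Real.exp_le_exp.2
      nlinarith [mul_nonneg hθ.le (sub_nonneg.2 hv.2)]
    have hc : (∫ v in s..m, Real.exp (-θ * (t - m)) * (v - s) ^ A)
        = Real.exp (-θ * (t - m)) * ((m - s) ^ (A + 1) / (A + 1)) := by
      rw [intervalIntegral.integral_const_mul]
      congr 1
      have heq := intervalIntegral.integral_comp_sub_right (a := s) (b := m)
        (fun w : ℝ => w ^ A) s
      rw [heq, integral_rpow (Or.inl hA1), sub_self, Real.zero_rpow hA1'.ne']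
      ring
    have hd : Real.exp (-θ * (t - m)) * ((m - s) ^ (A + 1) / (A + 1))
        ≤ (m - s) ^ A / (A + 1) * (1 / θ) := by
      rw [htm, Real.rpow_add_one hms0.ne', show -θ * (m - s) = -(θ * (m - s)) by ring]
      calc Real.exp (-(θ * (m - s))) * ((m - s) ^ A * (m - s) / (A + 1))
          = (m - s) ^ A / (A + 1) * (Real.exp (-(θ * (m - s))) * (m - s)) := by ring
        _ ≤ (m - s) ^ A / (A + 1) * (1 / θ) := by
            apply mul_le_mul_of_nonneg_left (expMulLe hθ)
            positivity
    calc (∫ v in s..m, B v) ≤ ∫ v in s..m, Real.exp (-θ * (t - m)) * (v - s) ^ A := hb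
      _ = Real.exp (-θ * (t - m)) * ((m - s) ^ (A + 1) / (A + 1)) := hc
      _ ≤ (m - s) ^ A / (A + 1) * (1 / θ) := hd
  -- piece 2
  have h2 : (∫ v in m..t, B v) ≤ (m - s) ^ A * (1 / θ) := by
    have hb : (∫ v in m..t, B v) ≤ ∫ v in m..t, Real.exp (-θ * (t - v)) * (m - s) ^ A := by
      rw [intervalIntegral.integral_of_le hmt.le, intervalIntegral.integral_of_le hmt.le]
      apply setIntegral_mono_on hB2.1
        ((((Real.continuous_exp.comp (by continuity)).mul
          continuous_const).intervalIntegrable m t).1) measurableSet_Ioc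
      intro v hv
      apply mul_le_mul_of_nonneg_left _ (Real.exp_pos _).le
      exact Real.rpow_le_rpow_of_nonpos hms0 (by linarith [hv.1]) hA0.le
    have hc : (∫ v in m..t, Real.exp (-θ * (t - v)) * (m - s) ^ A)
        = (∫ v in m..t, Real.exp (-θ * (t - v))) * (m - s) ^ A :=
      intervalIntegral.integral_mul_const _ _
    calc (∫ v in m..t, B v) ≤ (∫ v in m..t, Real.exp (-θ * (t - v))) * (m - s) ^ A := by
          rw [← hc]; exact hb
      _ ≤ (1 / θ) * (m - s) ^ A :=
          mul_le_mul_of_nonneg_right (expInt θ hθ m t) (Real.rpow_nonneg hms0.le _)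
      _ = (m - s) ^ A * (1 / θ) := by ring
  have hIle : I ≤ (m - s) ^ A * (1 / (A + 1) + 1) * (1 / θ) := by
    rw [hsplit]
    calc (∫ v in s..m, B v) + (∫ v in m..t, B v)
        ≤ (m - s) ^ A / (A + 1) * (1 / θ) + (m - s) ^ A * (1 / θ) := add_le_add h1 h2
      _ = (m - s) ^ A * (1 / (A + 1) + 1) * (1 / θ) := by ring
  have hmsT : (m - s) ^ A = 2 ^ (-A) * T ^ A := by
    have : m - s = T / 2 := by rw [hm, hT]; ring
    rw [this, Real.div_rpow hT0.le (by norm_num : (0:ℝ) ≤ 2),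
      Real.rpow_neg (by norm_num : (0:ℝ) ≤ 2)]
    ring
  calc (∫ u in (0:ℝ)..s, (∫ v in s..t, Real.exp (-θ * (s - u)) * Real.exp (-θ * (t - v)) *
            (u ^ (2 * H') + v ^ (2 * H')) ^ (K - 2) * (u * v) ^ (2 * H' - 1)))
      = ∫ u in (0:ℝ)..s, F u := rfl
    _ ≤ (1 / θ) * I := houter
    _ ≤ (1 / θ) * ((m - s) ^ A * (1 / (A + 1) + 1) * (1 / θ)) :=
        mul_le_mul_of_nonneg_left hIle (by positivity)
    _ = 2 ^ (-A) * (1 / (A + 1) + 1) / θ ^ 2 * T ^ A := by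
        rw [hmsT]; field_simp
    _ = 2 ^ (-A) * (1 / (A + 1) + 1) / θ ^ 2 * (t - s) ^ A := by rw [hT]
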